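/- Let h : ℝᵐ → ℝ be differentiable with L-Lipschitz gradient and bounded below. Consider gradient descent x_{k+1} = x_k − β·g_k where g_k is an inexact gradient satisfying ‖g_k − ∇h(x_k)‖ ≤ ε for all k, with step size β ∈ (0, 1/(2L)). Then min_{0 ≤ k ≤ K} ‖∇h(x_k)‖² ≤ (h(x₀) − inf h)/(β(1/2 − βL)K) + ((β/2 + β²L)/(β(1/2 − βL)))·ε². -/

import Mathlib

open scoped RealInnerProductSpace

variable {F : Type*} [NormedAddCommGroup F] [InnerProductSpace ℝ F] [CompleteSpace F]

lemma descent_lemma (h : F → ℝ) (grad : F → F)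
    (hgrad : ∀ x, HasGradientAt h (grad x) x)
    (L : ℝ) (hL : 0 ≤ L)
    (hLip : ∀ x₁ x₂, ‖grad x₁ - grad x₂‖ ≤ L * ‖x₁ - x₂‖)
    (x y : F) :
    h y ≤ h x + ⟪grad x, y - x⟫ + L / 2 * ‖y - x‖ ^ 2 := by
  set d := y - x with hd
  have hline : ∀ t : ℝ, HasDerivAt (fun t : ℝ => h (x + t • d)) ⟪grad (x + t • d), d⟫ t := by
    intro t
    have h1 : HasDerivAt (fun t : ℝ => x + t • d) d t := by
      simpa using ((hasDerivAt_id t).smul_const d).const_add x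
    have h2 := ((hgrad (x + t • d)).hasFDerivAt).comp_hasDerivAt t h1
    have h3 : HasDerivAt (fun t : ℝ => h (x + t • d)) ((InnerProductSpace.toDual ℝ F (grad (x + t • d))) d) t := h2
    simpa [real_inner_comm] using h3
  have hcont : Continuous grad := by
    refine LipschitzWith.continuous (K := ⟨L, hL⟩) ?_
    refine lipschitzWith_iff_dist_le_mul.2 fun a b => ?_
    rw [dist_eq_norm, dist_eq_norm]; exact hLip a b
  have hcurve : Continuous fun t : ℝ => x + t • d :=
    continuous_const.add (continuous_id.smul continuous_const)
  have hφcont : Continuous fun t : ℝ => ⟪grad (x + t • d), d⟫ :=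
    (hcont.comp hcurve).inner continuous_const
  have hint : h (x + (1:ℝ) • d) - h (x + (0:ℝ) • d)
      = ∫ t in (0:ℝ)..1, ⟪grad (x + t • d), d⟫ := by
    refine (intervalIntegral.integral_eq_sub_of_hasDerivAt (fun t _ => hline t) ?_).symm
    exact hφcont.intervalIntegrable 0 1
  have key : ∫ t in (0:ℝ)..1, ⟪grad (x + t • d), d⟫
      ≤ ∫ t in (0:ℝ)..1, (⟪grad x, d⟫ + L * t * ‖d‖ ^ 2) := by
    apply intervalIntegral.integral_mono_on (by norm_num)
    · exact hφcont.intervalIntegrable 0 1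
    · exact (Continuous.intervalIntegrable (by continuity) 0 1)
    · intro t ht
      have h1 : ⟪grad (x + t • d) - grad x, d⟫ ≤ ‖grad (x + t • d) - grad x‖ * ‖d‖ :=
        real_inner_le_norm _ _
      have h2 : ‖grad (x + t • d) - grad x‖ ≤ L * (t * ‖d‖) := by
        have := hLip (x + t • d) x
        simpa [norm_smul, abs_of_nonneg ht.1, mul_assoc] using this
      have h3 : ⟪grad (x + t • d), d⟫ = ⟪grad x, d⟫ + ⟪grad (x + t • d) - grad x, d⟫ := by
        rw [← inner_add_left]
        congr 1
        abel
      rw [h3]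
      have h4 : ⟪grad (x + t • d) - grad x, d⟫ ≤ L * t * ‖d‖ ^ 2 := by
        calc ⟪grad (x + t • d) - grad x, d⟫ ≤ ‖grad (x + t • d) - grad x‖ * ‖d‖ := h1
          _ ≤ L * (t * ‖d‖) * ‖d‖ := mul_le_mul_of_nonneg_right h2 (norm_nonneg _)
          _ = L * t * ‖d‖ ^ 2 := by ring
      linarith
  have hval : ∫ t in (0:ℝ)..1, (⟪grad x, d⟫ + L * t * ‖d‖ ^ 2)
      = ⟪grad x, d⟫ + L / 2 * ‖d‖ ^ 2 := by
    have e1 : ∀ t : ℝ, ⟪grad x, d⟫ + L * t * ‖d‖ ^ 2 = ⟪grad x, d⟫ + (L * ‖d‖ ^ 2) * t := by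
      intro t; ring
    simp only [e1]
    rw [intervalIntegral.integral_add (intervalIntegrable_const)
      (Continuous.intervalIntegrable (by continuity) 0 1),
      intervalIntegral.integral_const_mul, integral_id, intervalIntegral.integral_const]
    norm_num
    ring
  have hfin : h y - h x ≤ ⟪grad x, d⟫ + L / 2 * ‖d‖ ^ 2 := by
    have h5 := hint
    simp only [one_smul, zero_smul, add_zero, hd, add_sub_cancel] at h5
    linarith [key.trans_eq hval]
  linarith



/-- Inexact gradient descent on an L-smooth function bounded below:
min_{0 ≤ k ≤ K} ‖∇h(x_k)‖² ≤ (h(x₀) - inf h)/(β(1/2 - βL)K)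
  + ((β/2 + β²L)/(β(1/2 - βL)))·ε². -/
theorem inexact_gradient_descent_rate {m : ℕ}
    (h : EuclideanSpace ℝ (Fin m) → ℝ)
    (grad : EuclideanSpace ℝ (Fin m) → EuclideanSpace ℝ (Fin m))
    (hgrad : ∀ x, HasGradientAt h (grad x) x)
    (L : ℝ) (hL : 0 < L)
    (hLip : ∀ x₁ x₂, ‖grad x₁ - grad x₂‖ ≤ L * ‖x₁ - x₂‖)
    (hbdd : BddBelow (Set.range h))
    (x g : ℕ → EuclideanSpace ℝ (Fin m))
    (β ε : ℝ) (hβ0 : 0 < β) (hβ : β < 1 / (2 * L)) (hε : 0 ≤ ε)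
    (hupd : ∀ k, x (k + 1) = x k - β • g k)
    (hinexact : ∀ k, ‖g k - grad (x k)‖ ≤ ε) :
    ∀ K : ℕ, 0 < K → ∃ k ≤ K,
      ‖grad (x k)‖ ^ 2 ≤ (h (x 0) - sInf (Set.range h)) / (β * (1 / 2 - β * L) * K) +
        (β / 2 + β ^ 2 * L) / (β * (1 / 2 - β * L)) * ε ^ 2 := by
  set c1 : ℝ := β * (1 / 2 - β * L) with hc1
  set c2 : ℝ := β / 2 + β ^ 2 * L with hc2
  have hβL : β * L < 1 / 2 := by
    have h2L : (0:ℝ) < 2 * L := by linarith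
    calc β * L < (1 / (2 * L)) * L := by
          exact mul_lt_mul_of_pos_right hβ hL
      _ = 1 / 2 := by field_simp
  have hc1pos : 0 < c1 := by
    apply mul_pos hβ0; linarith
  -- one-step decrease
  have step : ∀ k, h (x (k + 1)) ≤ h (x k) - c1 * ‖grad (x k)‖ ^ 2 + c2 * ε ^ 2 := by
    intro k
    have hdesc := descent_lemma h grad hgrad L hL.le hLip (x k) (x (k + 1))
    have hdiff : x (k + 1) - x k = (-β) • g k := by
      rw [hupd k]; module
    set e := g k - grad (x k) with he
    have hge : g k = grad (x k) + e := by rw [he]; abel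
    set A := ‖grad (x k)‖
    set E := ‖e‖
    have hEε : E ≤ ε := hinexact k
    have hInner : ⟪grad (x k), x (k + 1) - x k⟫
        = -β * (A ^ 2 + ⟪grad (x k), e⟫) := by
      rw [hdiff, hge, inner_smul_right, inner_add_right, real_inner_self_eq_norm_sq]
    have hnorm : ‖x (k + 1) - x k‖ ^ 2 = β ^ 2 * (A ^ 2 + 2 * ⟪grad (x k), e⟫ + E ^ 2) := by
      rw [hdiff, norm_smul, hge]
      rw [mul_pow, @norm_add_sq_real]
      simp [real_inner_self_eq_norm_sq, sq_abs]
      left; ring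
    have hI1 : |⟪grad (x k), e⟫| ≤ A * E := abs_real_inner_le_norm _ _
    have hI2 : A * E ≤ (A ^ 2 + E ^ 2) / 2 := by nlinarith [sq_nonneg (A - E)]
    have hA : (0:ℝ) ≤ A := norm_nonneg _
    have hE : (0:ℝ) ≤ E := norm_nonneg _
    have habs := abs_le.1 hI1
    rw [hInner, hnorm] at hdesc
    have hE2 : E ^ 2 ≤ ε ^ 2 := by nlinarith
    rw [hc1, hc2]
    set I := ⟪grad (x k), e⟫ with hIdef
    have hLβ2 : (0:ℝ) ≤ L * β ^ 2 := by positivity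
    have f1 : -(β * I) ≤ β * ((A ^ 2 + E ^ 2) / 2) := by
      have : -I ≤ A * E := by linarith [habs.1]
      calc -(β * I) = β * (-I) := by ring
        _ ≤ β * (A * E) := mul_le_mul_of_nonneg_left this hβ0.le
        _ ≤ β * ((A ^ 2 + E ^ 2) / 2) := mul_le_mul_of_nonneg_left hI2 hβ0.le
    have f2 : L * β ^ 2 * I ≤ L * β ^ 2 * ((A ^ 2 + E ^ 2) / 2) := by
      have : I ≤ (A ^ 2 + E ^ 2) / 2 := le_trans habs.2 hI2
      exact mul_le_mul_of_nonneg_left this hLβ2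
    have f3 : β * E ^ 2 ≤ β * ε ^ 2 := mul_le_mul_of_nonneg_left hE2 hβ0.le
    have f4 : L * β ^ 2 * E ^ 2 ≤ L * β ^ 2 * ε ^ 2 := mul_le_mul_of_nonneg_left hE2 hLβ2
    linarith [hdesc, f1, f2, f3, f4]
  -- telescoping sum
  have hsum : ∀ K : ℕ, c1 * ∑ j ∈ Finset.range K, ‖grad (x j)‖ ^ 2
      ≤ h (x 0) - h (x K) + K * (c2 * ε ^ 2) := by
    intro K
    induction K with
    | zero => simp
    | succ n ih =>
      rw [Finset.sum_range_succ, mul_add]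
      have := step n
      push_cast
      nlinarith [this, ih]
  intro K hK
  have hKpos : (0:ℝ) < K := by exact_mod_cast hK
  obtain ⟨k, hkmem, hkmin⟩ := Finset.exists_min_image (Finset.range K)
    (fun j => ‖grad (x j)‖ ^ 2) ⟨0, Finset.mem_range.2 hK⟩
  refine ⟨k, (Finset.mem_range.1 hkmem).le, ?_⟩
  have hcard : (K : ℝ) * ‖grad (x k)‖ ^ 2 ≤ ∑ j ∈ Finset.range K, ‖grad (x j)‖ ^ 2 := by
    calc (K : ℝ) * ‖grad (x k)‖ ^ 2
        = ∑ _j ∈ Finset.range K, ‖grad (x k)‖ ^ 2 := by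
          rw [Finset.sum_const, Finset.card_range, nsmul_eq_mul]
      _ ≤ ∑ j ∈ Finset.range K, ‖grad (x j)‖ ^ 2 :=
          Finset.sum_le_sum fun j hj => hkmin j hj
  have hinf : sInf (Set.range h) ≤ h (x K) := csInf_le hbdd ⟨x K, rfl⟩
  have hmain : c1 * ((K : ℝ) * ‖grad (x k)‖ ^ 2)
      ≤ h (x 0) - sInf (Set.range h) + K * (c2 * ε ^ 2) := by
    calc c1 * ((K : ℝ) * ‖grad (x k)‖ ^ 2)
        ≤ c1 * ∑ j ∈ Finset.range K, ‖grad (x j)‖ ^ 2 :=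
          mul_le_mul_of_nonneg_left hcard hc1pos.le
      _ ≤ h (x 0) - h (x K) + K * (c2 * ε ^ 2) := hsum K
      _ ≤ h (x 0) - sInf (Set.range h) + K * (c2 * ε ^ 2) := by linarith
  have h1 : (0:ℝ) < c1 * K := mul_pos hc1pos hKpos
  have h2 : ‖grad (x k)‖ ^ 2 ≤ (h (x 0) - sInf (Set.range h) + K * (c2 * ε ^ 2)) / (c1 * K) := by
    rw [le_div_iff₀ h1]
    linarith [hmain]
  have h3 : (h (x 0) - sInf (Set.range h) + K * (c2 * ε ^ 2)) / (c1 * K)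
      = (h (x 0) - sInf (Set.range h)) / (c1 * K) + c2 / c1 * ε ^ 2 := by
    field_simp
  rw [h3] at h2
  rw [hc1, hc2] at h2
  convert h2 using 3
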